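/- Suppose μ(A) = ∫_A f dν for all measurable A, where f is a positive continuous function on a compact metric space Ω, and suppose ε^{-Q}μ(B(x,ε)) → f(x)·c uniformly on Ω as ε → 0+ for some constant c > 0. If f is uniformly continuous and bounded away from zero on Ω, then ε^{-Q}·ν(B(x,ε)) → c uniformly on Ω as ε → 0+. -/

import Mathlib

open MeasureTheory

set_option maxHeartbeats 1000000 in
/-- If `μ` has continuous positive density `f` with respect to `ν` on a compact metric
space and `ε^{-Q}·μ(B(x,ε)) → c·f(x)` uniformly as `ε → 0+`, then
`ε^{-Q}·ν(B(x,ε)) → c` uniformly as `ε → 0+`. -/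
theorem stmt9 {X : Type*} [MetricSpace X] [CompactSpace X] [MeasurableSpace X]
    [BorelSpace X] (ν μ : Measure X) (f : X → ℝ) (hf : Continuous f)
    (hfpos : ∀ x, 0 < f x) (Q c : ℝ) (hQ : 0 < Q) (hc : 0 < c)
    (hμ : ∀ A : Set X, MeasurableSet A → μ A = ENNReal.ofReal (∫ x in A, f x ∂ν))
    (hconv : ∀ δ : ℝ, 0 < δ → ∃ ε₁ : ℝ, 0 < ε₁ ∧ ∀ ε : ℝ, 0 < ε → ε ≤ ε₁ → ∀ x : X,
      |(μ (Metric.ball x ε)).toReal / ε ^ Q - c * f x| < δ) :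
    ∀ δ : ℝ, 0 < δ → ∃ ε₁ : ℝ, 0 < ε₁ ∧ ∀ ε : ℝ, 0 < ε → ε ≤ ε₁ → ∀ x : X,
      |(ν (Metric.ball x ε)).toReal / ε ^ Q - c| < δ := by
  rcases isEmpty_or_nonempty X with hX | hX
  · exact fun δ hδ => ⟨1, one_pos, fun ε hε hε' x => (hX.false x).elim⟩
  -- min and max of f
  obtain ⟨xm, -, hxm⟩ := isCompact_univ.exists_isMinOn Set.univ_nonempty hf.continuousOn
  obtain ⟨xM, -, hxM⟩ := isCompact_univ.exists_isMaxOn Set.univ_nonempty hf.continuousOn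
  set m := f xm with hmdef
  set M := f xM with hMdef
  have hm0 : 0 < m := hfpos xm
  have hM0 : 0 < M := hfpos xM
  have hlb : ∀ x, m ≤ f x := fun x => hxm (Set.mem_univ x)
  have hub : ∀ x, f x ≤ M := fun x => hxM (Set.mem_univ x)
  -- ν is a finite measure
  have hνfin : ν Set.univ ≠ ⊤ := by
    intro hν
    -- some unit ball has infinite measure
    have hball : ∃ x : X, ν (Metric.ball x 1) = ⊤ := by
      by_contra h
      push_neg at h
      obtain ⟨t, ht⟩ := isCompact_univ.elim_finite_subcover
        (fun x : X => Metric.ball x 1) (fun x => Metric.isOpen_ball)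
        (fun x _ => Set.mem_iUnion.2 ⟨x, Metric.mem_ball_self one_pos⟩)
      have : ν Set.univ ≤ ∑ i ∈ t, ν (Metric.ball i 1) :=
        le_trans (measure_mono ht) (measure_biUnion_finset_le t _)
      rw [hν] at this
      exact absurd (lt_of_le_of_lt this (ENNReal.sum_lt_top.2 fun i _ => (h i).lt_top))
        (lt_irrefl _)
    obtain ⟨x₀, hx₀⟩ := hball
    have hnotint : ¬ IntegrableOn f (Metric.ball x₀ 1) ν := by
      intro hi
      have hfi := hi.2
      rw [HasFiniteIntegral] at hfi
      have hlower : (ENNReal.ofReal m) * ν (Metric.ball x₀ 1)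
          ≤ ∫⁻ y in Metric.ball x₀ 1, ‖f y‖ₑ ∂ν := by
        rw [← MeasureTheory.setLIntegral_const]
        refine lintegral_mono fun y => ?_
        calc ENNReal.ofReal m ≤ ENNReal.ofReal (f y) := ENNReal.ofReal_le_ofReal (hlb y)
          _ = ‖f y‖ₑ := (Real.enorm_eq_ofReal (hfpos y).le).symm
      rw [hx₀, ENNReal.mul_top ((ENNReal.ofReal_pos.2 hm0).ne')] at hlower
      exact absurd (lt_of_le_of_lt hlower hfi) (by simp)
    have hμ0 : μ (Metric.ball x₀ 1) = 0 := by
      rw [hμ _ measurableSet_ball, integral_undef hnotint, ENNReal.ofReal_zero]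
    obtain ⟨ε₁, hε₁, hcv⟩ := hconv (c * f x₀) (mul_pos hc (hfpos x₀))
    have hεm : 0 < min ε₁ 1 := lt_min hε₁ one_pos
    have h1 := hcv (min ε₁ 1) hεm (min_le_left _ _) x₀
    have hμ0' : μ (Metric.ball x₀ (min ε₁ 1)) = 0 :=
      le_antisymm (le_trans (measure_mono (Metric.ball_subset_ball (min_le_right _ _)))
        hμ0.le) (zero_le)
    rw [hμ0'] at h1
    simp only [ENNReal.toReal_zero, zero_div, zero_sub, abs_neg] at h1
    rw [abs_of_pos (mul_pos hc (hfpos x₀))] at h1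
    exact absurd h1 (lt_irrefl _)
  haveI : IsFiniteMeasure ν := ⟨lt_top_iff_ne_top.2 hνfin⟩
  have hint : Integrable f ν := hf.integrable_of_hasCompactSupport
    (HasCompactSupport.of_compactSpace f)
  have huc : UniformContinuous f := CompactSpace.uniformContinuous_of_continuous hf
  intro δ hδ
  set δ₂ := min 1 (m * δ / 2) with hδ₂def
  have hδ₂ : 0 < δ₂ := lt_min one_pos (by nlinarith [mul_pos hm0 hδ])
  obtain ⟨ε₁, hε₁, hcv⟩ := hconv δ₂ hδ₂
  set η := m ^ 2 * δ / (2 * (c * M + 1)) with hηdef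
  have hη : 0 < η := div_pos (mul_pos (pow_pos hm0 2) hδ) (by nlinarith [mul_pos hc hM0])
  obtain ⟨r, hr, hfr⟩ := Metric.uniformContinuous_iff.mp huc η hη
  refine ⟨min ε₁ r, lt_min hε₁ hr, fun ε hε hεle x => ?_⟩
  set B := Metric.ball x ε with hBdef
  have hεQ : 0 < ε ^ Q := Real.rpow_pos_of_pos hε Q
  have hBfin : ν B ≠ ⊤ := measure_ne_top ν B
  set V := (ν B).toReal with hVdef
  have hV0 : 0 ≤ V := ENNReal.toReal_nonneg
  have hIB : IntegrableOn f B ν := hint.integrableOn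
  set a := ∫ y in B, f y ∂ν with hadef
  have hInn : 0 ≤ a := setIntegral_nonneg measurableSet_ball (fun y _ => (hfpos y).le)
  have hμB : (μ B).toReal = a := by
    rw [hμ B measurableSet_ball, ENNReal.toReal_ofReal hInn]
  have hA := hcv ε hε (hεle.trans (min_le_left _ _)) x
  rw [hμB] at hA
  set A := a / ε ^ Q with hAdef
  set W := V / ε ^ Q with hWdef
  have haA : a = A * ε ^ Q := (div_mul_cancel₀ a hεQ.ne').symm
  have hVW : V = W * ε ^ Q := (div_mul_cancel₀ V hεQ.ne').symm
  have hW0 : 0 ≤ W := div_nonneg hV0 hεQ.le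
  -- lower bound m*V ≤ a
  have hlow : m * V ≤ a := by
    have h1 : ∫ y in B, m ∂ν ≤ a :=
      setIntegral_mono_on (integrableOn_const hBfin) hIB
        measurableSet_ball (fun y _ => hlb y)
    rw [setIntegral_const, smul_eq_mul] at h1
    simp only [hVdef, measureReal_def] at h1 ⊢
    nlinarith [h1]
  have hmWA : m * W ≤ A := by
    rw [haA, hVW] at hlow
    have := le_of_mul_le_mul_right (by linarith [hlow] : (m * W) * ε ^ Q ≤ A * ε ^ Q) hεQ
    exact this
  -- closeness |a - f x * V| ≤ η * V
  have hclose : |A - f x * W| ≤ η * W := by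
    have hdiff : a - f x * V = ∫ y in B, (f y - f x) ∂ν := by
      rw [integral_sub hIB (integrableOn_const hBfin),
        setIntegral_const, smul_eq_mul]
      simp only [hadef, hVdef, measureReal_def]
      ring
    have hbound : ‖∫ y in B, (f y - f x) ∂ν‖ ≤ η * V := by
      refine norm_setIntegral_le_of_norm_le_const hBfin.lt_top (fun y hy => ?_)
      · have hdy : dist y x < r := lt_of_lt_of_le (Metric.mem_ball.mp hy)
          (hεle.trans (min_le_right _ _))
        have := hfr hdy
        rw [Real.dist_eq] at this
        exact (le_of_lt (by simpa [Real.norm_eq_abs] using this))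
    rw [Real.norm_eq_abs] at hbound
    rw [← hdiff] at hbound
    rw [haA, hVW] at hbound
    have h2 : |A - f x * W| * ε ^ Q ≤ (η * W) * ε ^ Q := by
      calc |A - f x * W| * ε ^ Q = |(A - f x * W) * ε ^ Q| := by
            rw [abs_mul, abs_of_pos hεQ]
        _ = |A * ε ^ Q - f x * (W * ε ^ Q)| := by ring_nf
        _ ≤ η * (W * ε ^ Q) := hbound
        _ = (η * W) * ε ^ Q := by ring
    exact le_of_mul_le_mul_right h2 hεQ
  -- derive bounds
  have hAub : A < c * M + 1 := by
    have h1 : A - c * f x < δ₂ := (abs_lt.mp hA).2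
    have h2 : c * f x ≤ c * M := mul_le_mul_of_nonneg_left (hub x) hc.le
    have h3 : δ₂ ≤ 1 := min_le_left _ _
    linarith
  have hηW : η * W ≤ m * δ / 2 := by
    have h1 : m * W < c * M + 1 := lt_of_le_of_lt hmWA hAub
    have h2 : η * W * m ≤ η * (c * M + 1) := by nlinarith
    have h3 : η * (c * M + 1) = m ^ 2 * δ / 2 := by
      rw [hηdef]; field_simp
    rw [h3] at h2
    nlinarith
  have hδ₂' : δ₂ ≤ m * δ / 2 := min_le_right _ _
  -- final estimate
  have key : f x * |W - c| < m * δ := by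
    have e : f x * (W - c) = (f x * W - A) + (A - c * f x) := by ring
    calc f x * |W - c| = |f x * (W - c)| := by rw [abs_mul, abs_of_pos (hfpos x)]
      _ ≤ |f x * W - A| + |A - c * f x| := by rw [e]; exact abs_add_le _ _
      _ < η * W + δ₂ := by
          refine add_lt_add_of_le_of_lt ?_ hA
          rw [abs_sub_comm]; exact hclose
      _ ≤ m * δ / 2 + m * δ / 2 := add_le_add hηW hδ₂'
      _ = m * δ := by ring
  have hfx := hlb x
  nlinarith [abs_nonneg (W - c), key, hfx, hm0]
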